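/- For the Weierstrass function u₀ with parameters 0 < a < 1, b an odd integer, ab > 1 + 3π/2, for every x ∈ ℝ the right upper limit superior of |(u₀(t) − u₀(x))/(t − x)| as t → x⁺ is +∞; equivalently, for every x and every n ∈ ℕ there exists y ∈ (x, x + 1/n) with |u₀(y) − u₀(x)| > n·|y − x|. -/

import Mathlib

open Real Finset

private lemma abs_cos_sub_cos' (u v : ℝ) : |Real.cos u - Real.cos v| ≤ |u - v| := by
  rw [Real.cos_sub_cos, abs_mul, abs_mul, abs_neg, abs_two]
  calc 2 * |Real.sin ((u + v) / 2)| * |Real.sin ((u - v) / 2)|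
      ≤ 2 * 1 * |(u - v) / 2| :=
        mul_le_mul (mul_le_mul_of_nonneg_left (Real.abs_sin_le_one _) (by norm_num))
          Real.abs_sin_le_abs (abs_nonneg _) (by norm_num)
    _ = |u - v| := by rw [abs_div, abs_two]; ring

private lemma summable_cosw {a : ℝ} (ha : 0 ≤ a) (ha1 : a < 1) (f : ℕ → ℝ)
    (hf : ∀ k, |f k| ≤ 2) : Summable (fun k => a ^ k * f k) := by
  apply Summable.of_norm_bounded (g := fun k => 2 * a ^ k)
    ((summable_geometric_of_lt_one ha ha1).mul_left 2)
  intro k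
  rw [Real.norm_eq_abs, abs_mul, abs_pow, abs_of_nonneg ha]
  have h1 : (0:ℝ) ≤ a ^ k := pow_nonneg ha k
  nlinarith [hf k, abs_nonneg (f k)]

private lemma cos_int_mul_pi' (j : ℤ) : Real.cos (j * Real.pi) = (-1 : ℝ) ^ j := by
  simpa using Real.cos_add_int_mul_pi 0 j

private lemma neg_one_zpow_odd_mul (c j : ℤ) (hc : Odd c) :
    (-1 : ℝ) ^ (c * j) = (-1 : ℝ) ^ j := by
  rcases Int.even_or_odd j with hj | hj
  · rw [Even.neg_one_zpow (hj.mul_left c), Even.neg_one_zpow hj]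
  · rw [Odd.neg_one_zpow (hc.mul hj), Odd.neg_one_zpow hj]

theorem weierstrass_right_upper_derivative_infinite (a : ℝ) (b : ℕ) (ha : 0 < a) (ha1 : a < 1)
    (hb : 0 < b) (hodd : Odd b) (hab : a * b > 1 + 3 * Real.pi / 2) :
    ∀ x : ℝ, ∀ n : ℕ, 0 < n → ∃ y ∈ Set.Ioo x (x + 1 / n),
      |(∑' m : ℕ, a ^ m * Real.cos ((b : ℝ) ^ m * y)) -
        (∑' m : ℕ, a ^ m * Real.cos ((b : ℝ) ^ m * x))| > n * |y - x| := by
  intro x n hn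
  have hπ := Real.pi_pos
  have hnR : (0:ℝ) < n := by exact_mod_cast hn
  obtain ⟨A, hAdef⟩ : ∃ A : ℝ, A = a * (b : ℝ) := ⟨_, rfl⟩
  have hab' : 1 + 3 * Real.pi / 2 < A := by rw [hAdef]; exact hab
  have hA1 : 1 < A := by linarith
  have hA1' : (0:ℝ) < A - 1 := by linarith
  have hb1 : (1:ℝ) ≤ (b : ℝ) := by exact_mod_cast hb
  obtain ⟨C, hCdef⟩ : ∃ C : ℝ, C = 1 - 3 * Real.pi / (2 * (A - 1)) := ⟨_, rfl⟩
  have hCpos : 0 < C := by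
    have h1 : 3 * Real.pi / 2 < A - 1 := by linarith
    have h2 : 3 * Real.pi / (2 * (A - 1)) < 1 := by
      rw [div_lt_one (by positivity)]
      linarith
    rw [hCdef]; linarith
  have hC1 : C ≤ 1 := by
    have h3 : 0 ≤ 3 * Real.pi / (2 * (A - 1)) := by positivity
    rw [hCdef]; linarith
  obtain ⟨m, hm⟩ := pow_unbounded_of_one_lt (3 * Real.pi * n / (2 * C)) hA1
  have hm' : 3 * Real.pi * n / 2 < C * A ^ m := by
    rw [div_lt_iff₀ (by positivity : (0:ℝ) < 2 * C)] at hm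
    nlinarith
  have hbm : (0:ℝ) < (b : ℝ) ^ m := by positivity
  have hApow : A ^ m = a ^ m * (b:ℝ) ^ m := by rw [hAdef]; exact mul_pow a (b:ℝ) m
  have hApos : (0:ℝ) < A ^ m := by positivity
  have hAb : A ^ m ≤ (b : ℝ) ^ m := by
    apply pow_le_pow_left₀ (by positivity)
    rw [hAdef]; nlinarith
  have hbm' : 3 * Real.pi * n / 2 < (b : ℝ) ^ m := by
    have : C * A ^ m ≤ A ^ m := by nlinarith
    linarith
  -- the rounding
  obtain ⟨α, hαdef⟩ : ∃ α : ℤ, α = round ((b : ℝ) ^ m * x / Real.pi) := ⟨_, rfl⟩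
  obtain ⟨E, hEdef⟩ : ∃ E : ℝ, E = (b : ℝ) ^ m * x - α * Real.pi := ⟨_, rfl⟩
  have hxeq : (b : ℝ) ^ m * x = α * Real.pi + E := by rw [hEdef]; ring
  have hEabs : |E| ≤ Real.pi / 2 := by
    have h := abs_sub_round ((b : ℝ) ^ m * x / Real.pi)
    have hE : E = ((b : ℝ) ^ m * x / Real.pi - α) * Real.pi := by
      rw [hEdef]; field_simp
    rw [hE, abs_mul, abs_of_pos hπ]
    rw [← hαdef] at h
    calc |(b : ℝ) ^ m * x / Real.pi - α| * Real.pi ≤ (1/2) * Real.pi := by gcongr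
      _ = Real.pi / 2 := by ring
  have hE1 : -(Real.pi/2) ≤ E := (abs_le.1 hEabs).1
  have hE2 : E ≤ Real.pi/2 := (abs_le.1 hEabs).2
  obtain ⟨y, hydef⟩ : ∃ y : ℝ, y = x + (Real.pi - E) / (b : ℝ) ^ m := ⟨_, rfl⟩
  have hyx : y - x = (Real.pi - E) / (b : ℝ) ^ m := by rw [hydef]; ring
  have hyxpos : 0 < y - x := by
    rw [hyx]; apply div_pos (by linarith) hbm
  have hyxle : y - x ≤ 3 * Real.pi / 2 / (b : ℝ) ^ m := by
    rw [hyx]; gcongr; linarith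
  have hyxlt : y - x < 1 / n := by
    have h2 : 3 * Real.pi / 2 / (b : ℝ) ^ m < 1 / n := by
      rw [div_lt_div_iff₀ hbm hnR]
      linarith
    linarith
  have hmem : y ∈ Set.Ioo x (x + 1 / n) := ⟨by linarith, by linarith⟩
  refine ⟨y, hmem, ?_⟩
  -- base identity
  have hby : (b : ℝ) ^ m * y = ((α : ℝ) + 1) * Real.pi := by
    have h : (b : ℝ) ^ m * y = (b : ℝ) ^ m * x + (Real.pi - E) := by
      rw [hydef]; field_simp
    rw [h, hxeq]; ring
  have hbodd : ∀ k : ℕ, Odd ((b : ℤ) ^ k) := by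
    intro k
    exact (Int.odd_coe_nat b |>.2 hodd).pow
  obtain ⟨s, hsdef⟩ : ∃ s : ℝ, s = (-1 : ℝ) ^ (α + 1) := ⟨_, rfl⟩
  have hs1 : |s| = 1 := by
    rcases Int.even_or_odd (α + 1) with h | h
    · rw [hsdef, Even.neg_one_zpow h]; norm_num
    · rw [hsdef, Odd.neg_one_zpow h]; norm_num
  have hsneg : (-1 : ℝ) ^ α = -s := by
    rw [hsdef, zpow_add₀ (by norm_num : (-1:ℝ) ≠ 0)]
    norm_num
  have hsy : ∀ k : ℕ, Real.cos ((b : ℝ) ^ (k + m) * y) = s := by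
    intro k
    have h1 : (b : ℝ) ^ (k + m) * y = (((b : ℤ) ^ k * (α + 1) : ℤ) : ℝ) * Real.pi := by
      rw [pow_add, mul_assoc, hby]
      push_cast
      ring
    rw [h1, cos_int_mul_pi', neg_one_zpow_odd_mul _ _ (hbodd k), hsdef]
  have hsx : ∀ k : ℕ, Real.cos ((b : ℝ) ^ (k + m) * x)
      = -s * Real.cos ((b : ℝ) ^ k * E) := by
    intro k
    have h1 : (b : ℝ) ^ (k + m) * x
        = (b : ℝ) ^ k * E + (((b : ℤ) ^ k * α : ℤ) : ℝ) * Real.pi := by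
      rw [pow_add, mul_assoc, hxeq]
      push_cast
      ring
    rw [h1, Real.cos_add_int_mul_pi, neg_one_zpow_odd_mul _ _ (hbodd k), hsneg]
  -- summability
  have hsum : ∀ t : ℝ, Summable (fun k => a ^ k * Real.cos ((b : ℝ) ^ k * t)) := by
    intro t
    apply summable_cosw ha.le ha1 (fun k => Real.cos ((b : ℝ) ^ k * t))
    intro k
    calc |Real.cos ((b:ℝ) ^ k * t)| ≤ 1 := Real.abs_cos_le_one _
      _ ≤ 2 := by norm_num
  obtain ⟨g, hgdef⟩ : ∃ g : ℕ → ℝ,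
      g = fun k => a ^ k * (Real.cos ((b : ℝ) ^ k * y) - Real.cos ((b : ℝ) ^ k * x)) := ⟨_, rfl⟩
  have hgsum : Summable g := by
    have h0 := (hsum y).sub (hsum x)
    apply h0.congr
    intro k
    simp only [hgdef]
    ring
  have hΔ : (∑' k : ℕ, a ^ k * Real.cos ((b : ℝ) ^ k * y)) -
      (∑' k : ℕ, a ^ k * Real.cos ((b : ℝ) ^ k * x)) = ∑' k, g k := by
    rw [← Summable.tsum_sub (hsum y) (hsum x)]
    apply tsum_congr
    intro k
    simp only [hgdef]
    ring
  have hsplit := (hgsum.sum_add_tsum_nat_add m).symm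
  -- the tail
  obtain ⟨T, hTdef⟩ : ∃ T : ℝ,
      T = ∑' k : ℕ, a ^ (k + m) * (1 + Real.cos ((b : ℝ) ^ k * E)) := ⟨_, rfl⟩
  have hTsum : Summable (fun k : ℕ => a ^ (k + m) * (1 + Real.cos ((b : ℝ) ^ k * E))) := by
    have h0 : Summable (fun k : ℕ => a ^ k * (1 + Real.cos ((b : ℝ) ^ k * E))) := by
      apply summable_cosw ha.le ha1 (fun k => 1 + Real.cos ((b : ℝ) ^ k * E))
      intro k
      rw [abs_le]
      constructor
      · linarith [Real.neg_one_le_cos ((b:ℝ)^k * E)]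
      · linarith [Real.cos_le_one ((b:ℝ)^k * E)]
    apply (h0.mul_left (a ^ m)).congr
    intro k
    rw [pow_add]; ring
  have hterm : ∀ k : ℕ, g (k + m) = s * (a ^ (k + m) * (1 + Real.cos ((b : ℝ) ^ k * E))) := by
    intro k
    simp only [hgdef]
    rw [hsy k, hsx k]
    ring
  have hS2 : (∑' k : ℕ, g (k + m)) = s * T := by
    rw [hTdef, ← tsum_mul_left]
    exact tsum_congr hterm
  have hTnonneg : ∀ k : ℕ, 0 ≤ a ^ (k + m) * (1 + Real.cos ((b : ℝ) ^ k * E)) := by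
    intro k
    apply mul_nonneg (pow_nonneg ha.le _)
    linarith [Real.neg_one_le_cos ((b:ℝ)^k * E)]
  have hcosE : 0 ≤ Real.cos E :=
    Real.cos_nonneg_of_mem_Icc ⟨by linarith, by linarith⟩
  have hTge : a ^ m ≤ T := by
    have h0 := hTsum.le_tsum 0 (fun i _ => hTnonneg i)
    rw [← hTdef] at h0
    simp only [zero_add, pow_zero, one_mul] at h0
    have ham : (0:ℝ) ≤ a ^ m := pow_nonneg ha.le m
    have h2 := mul_nonneg ham hcosE
    have h3 : a ^ m * (1 + Real.cos E) = a ^ m + a ^ m * Real.cos E := by ring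
    linarith
  have hTpos : 0 ≤ T := le_trans (pow_nonneg ha.le m) hTge
  -- the head
  have hS1 : |∑ i ∈ range m, g i| ≤ A ^ m / (A - 1) * (y - x) := by
    calc |∑ i ∈ range m, g i| ≤ ∑ i ∈ range m, |g i| := Finset.abs_sum_le_sum_abs _ _
      _ ≤ ∑ i ∈ range m, A ^ i * (y - x) := by
          apply Finset.sum_le_sum
          intro i _
          simp only [hgdef]
          rw [abs_mul, abs_pow, abs_of_pos ha]
          have h1 : |Real.cos ((b:ℝ)^i * y) - Real.cos ((b:ℝ)^i * x)|
              ≤ (b:ℝ)^i * (y - x) := by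
            calc |Real.cos ((b:ℝ)^i * y) - Real.cos ((b:ℝ)^i * x)|
                ≤ |(b:ℝ)^i * y - (b:ℝ)^i * x| := abs_cos_sub_cos' _ _
              _ = (b:ℝ)^i * (y - x) := by
                  rw [← mul_sub, abs_mul, abs_of_pos (by positivity : (0:ℝ) < (b:ℝ)^i),
                    abs_of_pos hyxpos]
          calc a ^ i * |Real.cos ((b:ℝ)^i * y) - Real.cos ((b:ℝ)^i * x)|
              ≤ a ^ i * ((b:ℝ)^i * (y - x)) :=
                mul_le_mul_of_nonneg_left h1 (pow_nonneg ha.le i)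
            _ = A ^ i * (y - x) := by rw [hAdef, mul_pow]; ring
      _ = (∑ i ∈ range m, A ^ i) * (y - x) := by rw [Finset.sum_mul]
      _ ≤ A ^ m / (A - 1) * (y - x) := by
          apply mul_le_mul_of_nonneg_right _ hyxpos.le
          rw [geom_sum_eq (ne_of_gt hA1)]
          exact (div_le_div_iff_of_pos_right hA1').2 (by linarith)
  have hS1' : |∑ i ∈ range m, g i| ≤ (1 - C) * a ^ m := by
    calc |∑ i ∈ range m, g i| ≤ A ^ m / (A - 1) * (y - x) := hS1
      _ ≤ A ^ m / (A - 1) * (3 * Real.pi / 2 / (b:ℝ) ^ m) :=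
          mul_le_mul_of_nonneg_left hyxle (by positivity)
      _ = (1 - C) * a ^ m := by
          rw [hCdef]
          field_simp
          rw [hApow]
          ring
  -- conclusion
  rw [hΔ, hsplit]
  have habs : T - (1 - C) * a ^ m ≤ |∑ i ∈ range m, g i + ∑' k : ℕ, g (k + m)| := by
    have h1 : |∑' k : ℕ, g (k + m)| = T := by
      rw [hS2, abs_mul, hs1, one_mul, abs_of_nonneg hTpos]
    have hq : |∑' k : ℕ, g (k + m)|
        ≤ |∑ i ∈ range m, g i + ∑' k : ℕ, g (k + m)| + |∑ i ∈ range m, g i| := by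
      calc |∑' k : ℕ, g (k + m)|
          = |(∑ i ∈ range m, g i + ∑' k : ℕ, g (k + m)) + (-(∑ i ∈ range m, g i))| := by
            congr 1; ring
        _ ≤ |∑ i ∈ range m, g i + ∑' k : ℕ, g (k + m)| + |-(∑ i ∈ range m, g i)| :=
            abs_add_le _ _
        _ = _ := by rw [abs_neg]
    rw [h1] at hq
    linarith
  have hfin : (n : ℝ) * |y - x| < C * a ^ m := by
    rw [abs_of_pos hyxpos]
    have h1 : (n:ℝ) * (y - x) ≤ (n:ℝ) * (3 * Real.pi / 2 / (b:ℝ) ^ m) :=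
      mul_le_mul_of_nonneg_left hyxle hnR.le
    have h2 : (n:ℝ) * (3 * Real.pi / 2 / (b:ℝ) ^ m) < C * a ^ m := by
      have heq : (n:ℝ) * (3 * Real.pi / 2 / (b:ℝ) ^ m)
          = (3 * Real.pi * n / 2) / (b:ℝ) ^ m := by ring
      rw [heq, div_lt_iff₀ hbm]
      calc 3 * Real.pi * n / 2 < C * A ^ m := hm'
        _ = C * a ^ m * (b:ℝ) ^ m := by rw [hApow]; ring
    linarith
  calc (n : ℝ) * |y - x| < C * a ^ m := hfin
    _ ≤ T - (1 - C) * a ^ m := by linarith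
    _ ≤ _ := habs
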